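/- Let L/K be a finite Galois field extension, G a group acting on L through a surjection onto Gal(L/K) with kernel H, and V, W semilinear representations of G over L. For any field extension K'/K, set L' := K' ⊗_K L with the induced G-action. Then the natural map K' ⊗_K Hom_{L⋊G}(V, W) → Hom_{L'⋊G}(L' ⊗_L V, L' ⊗_L W) is an isomorphism of K'-vector spaces. -/

import Mathlib

open scoped TensorProduct

variable {K L : Type*} [Field K] [Field L] [Algebra K L]
variable {G : Type*} [Group G]
variable {V W : Type*} [AddCommGroup V] [Module K V] [Module L V] [IsScalarTower K L V]
  [AddCommGroup W] [Module K W] [Module L W] [IsScalarTower K L W]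

/-- `Hom_{L⋊G}(V, W)`: `L`-linear `G`-equivariant maps between semilinear
representations, as a `K`-submodule of `V →ₗ[K] W`. -/
def homSL (σ : G →* (L ≃ₐ[K] L))
    (ρV : G →* (V ≃ₗ[K] V)) (ρW : G →* (W ≃ₗ[K] W)) :
    Submodule K (V →ₗ[K] W) where
  carrier := {f | (∀ (c : L) (v : V), f (c • v) = c • f v) ∧
    ∀ (g : G) (v : V), f (ρV g v) = ρW g (f v)}
  add_mem' := by
    intro f g hf hg
    exact ⟨fun c v => by simp [hf.1, hg.1], fun g' v => by simp [hf.2, hg.2]⟩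
  zero_mem' := ⟨fun c v => by simp, fun g v => by simp⟩
  smul_mem' := by
    intro c f hf
    refine ⟨fun a v => ?_, fun g v => by simp [hf.2]⟩
    rw [LinearMap.smul_apply, LinearMap.smul_apply, hf.1, smul_comm]

variable (K' : Type*) [Field K'] [Algebra K K']

/-- The action of `a ∈ L ⊆ L' = K' ⊗_K L` on the base change `K' ⊗_K V`. -/
noncomputable def aMap (a : L) : (K' ⊗[K] V) →ₗ[K] (K' ⊗[K] V) :=
  LinearMap.lTensor K' ((LinearMap.lsmul L V a).restrictScalars K)

/-- The (semilinear) action of `g ∈ G` on the base change `K' ⊗_K V`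
(`G` acts trivially on `K'`). -/
noncomputable def bMap (ρV : G →* (V ≃ₗ[K] V)) (g : G) :
    (K' ⊗[K] V) →ₗ[K] (K' ⊗[K] V) :=
  LinearMap.lTensor K' (ρV g).toLinearMap

/-- `Hom_{L'⋊G}(V_{L'}, W_{L'})` for `L' = K' ⊗_K L`: the set of maps that are
`K'`-linear, commute with the action of `L`, and are `G`-equivariant. -/
def homSL' (ρV : G →* (V ≃ₗ[K] V)) (ρW : G →* (W ≃ₗ[K] W)) :
    Set ((K' ⊗[K] V) →ₗ[K] (K' ⊗[K] W)) :=
  {f | (∀ (k : K') (x : K' ⊗[K] V), f (k • x) = k • f x) ∧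
    (∀ (a : L) (x : K' ⊗[K] V), f (aMap K' a x) = aMap K' a (f x)) ∧
    ∀ (g : G) (x : K' ⊗[K] V), f (bMap K' ρV g x) = bMap K' ρW g (f x)}

/-- The natural base-change map
`K' ⊗_K Hom_{L⋊G}(V, W) → Hom((K' ⊗_K V) → (K' ⊗_K W))`, `k ⊗ f ↦ k • (1 ⊗ f)`. -/
noncomputable def bcMap (σ : G →* (L ≃ₐ[K] L))
    (ρV : G →* (V ≃ₗ[K] V)) (ρW : G →* (W ≃ₗ[K] W)) :
    K' ⊗[K] (homSL σ ρV ρW) →ₗ[K] ((K' ⊗[K] V) →ₗ[K] (K' ⊗[K] W)) :=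
  TensorProduct.lift
    (LinearMap.mk₂ K
      (fun (k : K') (f : homSL σ ρV ρW) => k • LinearMap.lTensor K' (f : V →ₗ[K] W))
      (fun k k' f => add_smul k k' _)
      (fun c k f => smul_assoc c k _)
      (fun k f g => by
        simp only [Submodule.coe_add, LinearMap.lTensor_add, smul_add])
      (fun k c f => by
        simp only [SetLike.val_smul, LinearMap.lTensor_smul]
        exact smul_comm c k (LinearMap.lTensor K' (f : V →ₗ[K] W))))


section Aux

open scoped TensorProduct

variable {K K' : Type*} [Field K] [Field K'] [Algebra K K']
variable {ι : Type*} [DecidableEq ι] (b : Module.Basis ι K K')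
variable {N : Type*} [AddCommGroup N] [Module K N]

/-- Decomposition of `K' ⊗[K] N` along a `K`-basis of `K'`. -/
noncomputable def eAux : K' ⊗[K] N ≃ₗ[K] (ι →₀ N) :=
  (TensorProduct.congr b.repr (LinearEquiv.refl K N)).trans
    (TensorProduct.finsuppScalarLeft K N ι)

/-- The `i`-th coefficient of an element of `K' ⊗[K] N` along a basis of `K'`. -/
noncomputable def coeffAux (i : ι) : K' ⊗[K] N →ₗ[K] N :=
  (Finsupp.lapply i).comp (eAux b (N := N)).toLinearMap

lemma coeffAux_apply (i : ι) (y : K' ⊗[K] N) : coeffAux b i y = eAux b y i := rfl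

lemma coeffAux_tmul (i : ι) (k : K') (n : N) :
    coeffAux b i (k ⊗ₜ[K] n) = b.repr k i • n := by
  simp [coeffAux_apply, eAux, TensorProduct.finsuppScalarLeft_apply_tmul_apply]

lemma coeffAux_eq_zero (y : K' ⊗[K] N) (h : ∀ i, coeffAux b i y = 0) : y = 0 := by
  have h0 : eAux b y = 0 := by
    ext i
    exact h i
  exact (LinearEquiv.map_eq_zero_iff (eAux b)).1 h0

lemma lTensorAux_smul {P : Type*} [AddCommGroup P] [Module K P]
    (f : N →ₗ[K] P) (k : K') (y : K' ⊗[K] N) :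
    LinearMap.lTensor K' f (k • y) = k • LinearMap.lTensor K' f y := by
  induction y using TensorProduct.induction_on with
  | zero => simp
  | tmul k' n => rw [TensorProduct.smul_tmul', LinearMap.lTensor_tmul,
      LinearMap.lTensor_tmul, TensorProduct.smul_tmul']
  | add y1 y2 h1 h2 => rw [smul_add, map_add, h1, h2, map_add, smul_add]

lemma coeffAux_reconstruct (T : Finset ι) (y : K' ⊗[K] N)
    (h : ∀ i ∉ T, coeffAux b i y = 0) :
    y = ∑ i ∈ T, b i ⊗ₜ[K] coeffAux b i y := by
  apply (eAux b).injective
  ext j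
  rw [map_sum, Finsupp.finset_sum_apply]
  have hterm : ∀ i ∈ T, eAux b (b i ⊗ₜ[K] coeffAux b i y) j
      = if j = i then coeffAux b j y else 0 := by
    intro i _
    rw [← coeffAux_apply, coeffAux_tmul, b.repr_self]
    by_cases hij : j = i
    · subst hij; simp
    · simp [Finsupp.single_eq_of_ne (Ne.symm hij), hij]
  rw [Finset.sum_congr rfl hterm, Finset.sum_ite_eq]
  by_cases hj : j ∈ T
  · simp [hj, coeffAux_apply]
  · simp only [hj, if_false]
    rw [← coeffAux_apply, h j hj]

end Aux

section MainAux

variable (σ : G →* (L ≃ₐ[K] L)) (ρV : G →* (V ≃ₗ[K] V)) (ρW : G →* (W ≃ₗ[K] W))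

lemma mem_homSL {f : V →ₗ[K] W} : f ∈ homSL σ ρV ρW ↔
    (∀ (c : L) (v : V), f (c • v) = c • f v) ∧
      ∀ (g : G) (v : V), f (ρV g v) = ρW g (f v) := Iff.rfl

lemma bcMap_tmul (k : K') (f : homSL σ ρV ρW) :
    bcMap K' σ ρV ρW (k ⊗ₜ[K] f) = k • LinearMap.lTensor K' (f : V →ₗ[K] W) := by
  simp [bcMap]

lemma aMap_tmul (a : L) (k : K') (v : V) :
    aMap K' a (k ⊗ₜ[K] v) = k ⊗ₜ[K] (a • v) := by
  simp [aMap]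

lemma bMap_tmul (g : G) (k : K') (v : V) :
    bMap K' ρV g (k ⊗ₜ[K] v) = k ⊗ₜ[K] (ρV g v) := by
  simp [bMap]

lemma aMap_smul (a : L) (k : K') (y : K' ⊗[K] V) :
    aMap K' a (k • y) = k • aMap K' a y :=
  lTensorAux_smul ((LinearMap.lsmul L V a).restrictScalars K) k y

lemma bMap_smul (g : G) (k : K') (y : K' ⊗[K] V) :
    bMap K' ρV g (k • y) = k • bMap K' ρV g y :=
  lTensorAux_smul (ρV g).toLinearMap k y

lemma lTensor_comm_aMap (f : V →ₗ[K] W) (hf : ∀ (c : L) (v : V), f (c • v) = c • f v)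
    (a : L) (y : K' ⊗[K] V) :
    LinearMap.lTensor K' f (aMap K' a y) = aMap K' a (LinearMap.lTensor K' f y) := by
  induction y using TensorProduct.induction_on with
  | zero => simp
  | tmul k v => rw [aMap_tmul, LinearMap.lTensor_tmul, LinearMap.lTensor_tmul, aMap_tmul, hf]
  | add y1 y2 h1 h2 => rw [map_add, map_add, h1, h2, map_add, map_add]

lemma lTensor_comm_bMap (f : V →ₗ[K] W) (g : G)
    (hf : ∀ v : V, f (ρV g v) = ρW g (f v)) (y : K' ⊗[K] V) :
    LinearMap.lTensor K' f (bMap K' ρV g y) = bMap K' ρW g (LinearMap.lTensor K' f y) := by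
  induction y using TensorProduct.induction_on with
  | zero => simp
  | tmul k v => rw [bMap_tmul, LinearMap.lTensor_tmul, LinearMap.lTensor_tmul, bMap_tmul, hf]
  | add y1 y2 h1 h2 => rw [map_add, map_add, h1, h2, map_add, map_add]

end MainAux

set_option maxHeartbeats 2000000 in
/-- Let `L/K` be a finite Galois field extension, `G` a group acting
on `L` via a surjection onto `Gal(L/K)`, and `V, W` semilinear representations of `G`
over `L`.  For any field extension `K'/K`, with `L' := K' ⊗_K L`, the natural map
`K' ⊗_K Hom_{L⋊G}(V, W) → Hom_{L'⋊G}(L' ⊗_L V, L' ⊗_L W)` is an isomorphism of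
`K'`-vector spaces: it is injective with range exactly the `L'`-linear `G`-equivariant
maps `K' ⊗_K V → K' ⊗_K W`. -/
theorem stmt12 [FiniteDimensional K L] [IsGalois K L]
    (σ : G →* (L ≃ₐ[K] L)) (hσ : Function.Surjective σ)
    [FiniteDimensional L V] [FiniteDimensional L W]
    (ρV : G →* (V ≃ₗ[K] V)) (hρV : ∀ g (c : L) (v : V), ρV g (c • v) = σ g c • ρV g v)
    (ρW : G →* (W ≃ₗ[K] W)) (hρW : ∀ g (c : L) (w : W), ρW g (c • w) = σ g c • ρW g w) :
    Function.Injective (bcMap K' σ ρV ρW) ∧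
    Set.range (bcMap K' σ ρV ρW) = homSL' (L := L) K' ρV ρW := by
  classical
  haveI : FiniteDimensional K V := FiniteDimensional.trans K L V
  set M := homSL σ ρV ρW with hM
  let b := Module.Basis.ofVectorSpace K K'
  -- key computation: coefficients of `bcMap x (1 ⊗ v)`
  have keyC : ∀ (x : K' ⊗[K] M) (i : Module.Basis.ofVectorSpaceIndex K K') (v : V),
      coeffAux b i (bcMap K' σ ρV ρW x ((1 : K') ⊗ₜ[K] v))
        = (coeffAux (N := ↥M) b i x : V →ₗ[K] W) v := by
    intro x i v
    induction x using TensorProduct.induction_on with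
    | zero => simp
    | tmul k f =>
        rw [bcMap_tmul, LinearMap.smul_apply, LinearMap.lTensor_tmul,
          TensorProduct.smul_tmul', smul_eq_mul, mul_one, coeffAux_tmul, coeffAux_tmul]
        rfl
    | add x1 x2 h1 h2 =>
        rw [map_add, LinearMap.add_apply, map_add, map_add]
        simp [h1, h2]
  have hinj : Function.Injective (bcMap K' σ ρV ρW) := by
    intro x y hxy
    have hsub : x - y = 0 := by
      apply coeffAux_eq_zero b
      intro i
      apply Subtype.ext
      apply LinearMap.ext
      intro v
      have h0 : bcMap K' σ ρV ρW (x - y) = 0 := by rw [map_sub, hxy, sub_self]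
      have := keyC (x - y) i v
      rw [h0] at this
      simpa using this.symm
    exact sub_eq_zero.mp hsub
  refine ⟨hinj, ?_⟩
  apply Set.Subset.antisymm
  · rintro _ ⟨x, rfl⟩
    refine ⟨?_, ?_, ?_⟩
    · intro k y
      induction x using TensorProduct.induction_on with
      | zero => simp
      | tmul k' f =>
          rw [bcMap_tmul, LinearMap.smul_apply, LinearMap.smul_apply,
            lTensorAux_smul, smul_comm]
      | add x1 x2 h1 h2 =>
          rw [map_add, LinearMap.add_apply, LinearMap.add_apply, h1, h2, smul_add]
    · intro a y
      induction x using TensorProduct.induction_on with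
      | zero => simp
      | tmul k' f =>
          rw [bcMap_tmul, LinearMap.smul_apply, LinearMap.smul_apply,
            lTensor_comm_aMap K' (f : V →ₗ[K] W) ((mem_homSL σ ρV ρW).mp f.2).1 a y,
            aMap_smul]
      | add x1 x2 h1 h2 =>
          rw [map_add, LinearMap.add_apply, LinearMap.add_apply, h1, h2, map_add]
    · intro g y
      induction x using TensorProduct.induction_on with
      | zero => simp
      | tmul k' f =>
          rw [bcMap_tmul, LinearMap.smul_apply, LinearMap.smul_apply,
            lTensor_comm_bMap K' ρV ρW (f : V →ₗ[K] W) g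
              (fun v => ((mem_homSL σ ρV ρW).mp f.2).2 g v) y,
            bMap_smul]
      | add x1 x2 h1 h2 =>
          rw [map_add, LinearMap.add_apply, LinearMap.add_apply, h1, h2, map_add]
  · intro f hf
    obtain ⟨h1, h2, h3⟩ := hf
    set φ : V →ₗ[K] K' ⊗[K] W := f.comp ((TensorProduct.mk K K' V) 1) with hφ
    have hφapp : ∀ v : V, φ v = f ((1 : K') ⊗ₜ[K] v) := fun v => rfl
    set fi : Module.Basis.ofVectorSpaceIndex K K' → (V →ₗ[K] W) :=
      fun i => (coeffAux b i).comp φ with hfi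
    have hmem : ∀ i, fi i ∈ homSL σ ρV ρW := by
      intro i
      rw [mem_homSL]
      constructor
      · intro c v
        have e1 : (1 : K') ⊗ₜ[K] (c • v) = aMap K' c ((1 : K') ⊗ₜ[K] v) :=
          (aMap_tmul K' c 1 v).symm
        have e2 : ∀ y : K' ⊗[K] W, coeffAux b i (aMap K' c y) = c • coeffAux b i y := by
          intro y
          induction y using TensorProduct.induction_on with
          | zero => simp
          | tmul k w => rw [aMap_tmul, coeffAux_tmul, coeffAux_tmul, smul_comm]
          | add y1 y2 hy1 hy2 => rw [map_add, map_add, hy1, hy2, map_add, smul_add]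
        show coeffAux b i (φ (c • v)) = c • coeffAux b i (φ v)
        rw [hφapp, hφapp, e1, h2, e2]
      · intro g v
        have e1 : (1 : K') ⊗ₜ[K] (ρV g v) = bMap K' ρV g ((1 : K') ⊗ₜ[K] v) :=
          (bMap_tmul K' ρV g 1 v).symm
        have e2 : ∀ y : K' ⊗[K] W, coeffAux b i (bMap K' ρW g y)
            = ρW g (coeffAux b i y) := by
          intro y
          induction y using TensorProduct.induction_on with
          | zero => simp
          | tmul k w => rw [bMap_tmul, coeffAux_tmul, coeffAux_tmul, map_smul]
          | add y1 y2 hy1 hy2 => rw [map_add, map_add, hy1, hy2, map_add, map_add]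
        show coeffAux b i (φ (ρV g v)) = ρW g (coeffAux b i (φ v))
        rw [hφapp, hφapp, e1, h3, e2]
    set vb := Module.finBasis K V with hvb
    set T : Finset (Module.Basis.ofVectorSpaceIndex K K') :=
      Finset.univ.biUnion (fun j => (eAux b (φ (vb j))).support) with hT
    have hTzero : ∀ i ∉ T, fi i = 0 := by
      intro i hi
      apply vb.ext
      intro j
      have hns : i ∉ (eAux b (φ (vb j))).support := by
        intro hmem'
        exact hi (Finset.mem_biUnion.mpr ⟨j, Finset.mem_univ j, hmem'⟩)
      simpa [hfi, coeffAux_apply] using Finsupp.notMem_support_iff.mp hns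
    refine ⟨∑ i ∈ T, b i ⊗ₜ[K] (⟨fi i, hmem i⟩ : M), ?_⟩
    apply TensorProduct.ext'
    intro k v
    have hk : (k ⊗ₜ[K] v : K' ⊗[K] V) = k • ((1 : K') ⊗ₜ[K] v) := by
      rw [TensorProduct.smul_tmul', smul_eq_mul, mul_one]
    have hrec : φ v = ∑ i ∈ T, b i ⊗ₜ[K] coeffAux b i (φ v) := by
      apply coeffAux_reconstruct b T (φ v)
      intro i hi
      show fi i v = 0
      rw [hTzero i hi]
      rfl
    calc bcMap K' σ ρV ρW (∑ i ∈ T, b i ⊗ₜ[K] (⟨fi i, hmem i⟩ : M)) (k ⊗ₜ[K] v)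
        = ∑ i ∈ T, (b i • LinearMap.lTensor K' (fi i)) (k ⊗ₜ[K] v) := by
          rw [map_sum, LinearMap.sum_apply]
          exact Finset.sum_congr rfl fun i _ => by rw [bcMap_tmul]
      _ = ∑ i ∈ T, k • (b i ⊗ₜ[K] (fi i v)) := by
          apply Finset.sum_congr rfl
          intro i _
          rw [LinearMap.smul_apply, LinearMap.lTensor_tmul, TensorProduct.smul_tmul',
            TensorProduct.smul_tmul', smul_eq_mul, smul_eq_mul, mul_comm]
      _ = k • φ v := by
          rw [← Finset.smul_sum]
          congr 1
          rw [hrec]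
          rfl
      _ = f (k ⊗ₜ[K] v) := by rw [hφapp, ← h1, ← hk]
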